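/- Let (ε_N) be a sequence in [0,1) with ε_N → 0. For every real a and every z ∈ ℂ, the sequence T_N^ε[a](z) = exp(i·ε_N·z)·(cos(z(1−ε_N)/N) + i·a·sin(z(1−ε_N)/N))^N converges to exp(iaz) as N → ∞, uniformly on compact subsets of ℂ. -/

import Mathlib

set_option maxHeartbeats 1000000

open Complex Filter

private lemma pow_sub_pow_norm_le (x y : ℂ) (M : ℝ) (hM : 1 ≤ M) (hx : ‖x‖ ≤ M)
    (hy : ‖y‖ ≤ M) (n : ℕ) :
    ‖x ^ n - y ^ n‖ ≤ n * M ^ n * ‖x - y‖ := by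
  induction n with
  | zero => simp
  | succ n ih =>
    have h2 : (0:ℝ) ≤ ‖x - y‖ := norm_nonneg _
    have h3 : (0:ℝ) ≤ M ^ n := by positivity
    have hxn : ‖x ^ n‖ ≤ M ^ n := by
      rw [norm_pow]; exact pow_le_pow_left₀ (norm_nonneg x) hx n
    have h1 : M ^ n ≤ M ^ (n+1) := pow_le_pow_right₀ hM (Nat.le_succ n)
    have hid : x ^ (n+1) - y ^ (n+1) = x ^ n * (x - y) + (x ^ n - y ^ n) * y := by ring
    have t0 : ‖x ^ (n+1) - y ^ (n+1)‖
        ≤ ‖x ^ n‖ * ‖x - y‖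
          + ‖x ^ n - y ^ n‖ * ‖y‖ := by
      rw [hid]
      refine (norm_add_le _ _).trans ?_
      rw [norm_mul, norm_mul]
    have t1 : ‖x ^ n‖ * ‖x - y‖ ≤ M ^ n * ‖x - y‖ :=
      mul_le_mul_of_nonneg_right hxn h2
    have t2 : ‖x ^ n - y ^ n‖ * ‖y‖
        ≤ ((n : ℝ) * M ^ n * ‖x - y‖) * M :=
      mul_le_mul ih hy (norm_nonneg _) (by positivity)
    have hgoal : ((n+1 : ℕ) : ℝ) * M ^ (n+1) * ‖x - y‖
        = M ^ (n+1) * ‖x - y‖ + (n : ℝ) * M ^ (n+1) * ‖x - y‖ := by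
      push_cast; ring
    rw [hgoal]
    have hp : M ^ n * M = M ^ (n+1) := (pow_succ M n).symm
    have t3 : ((n : ℝ) * M ^ n * ‖x - y‖) * M
        = (n : ℝ) * M ^ (n+1) * ‖x - y‖ := by rw [← hp]; ring
    have t4 : M ^ n * ‖x - y‖ ≤ M ^ (n+1) * ‖x - y‖ :=
      mul_le_mul_of_nonneg_right h1 h2
    linarith

private lemma cos_add_sin_eq (w : ℂ) (a : ℝ) :
    Complex.cos w + Complex.I * a * Complex.sin w
      = ((1+(a:ℂ))/2) * Complex.exp (Complex.I * w)
        + ((1-(a:ℂ))/2) * Complex.exp (-(Complex.I * w)) := by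
  have h1 : Complex.exp (Complex.I * w) = Complex.cos w + Complex.sin w * Complex.I := by
    rw [mul_comm]; exact Complex.exp_mul_I w
  have h2 : Complex.exp (-(Complex.I * w)) = Complex.cos w - Complex.sin w * Complex.I := by
    have h : -(Complex.I * w) = (-w) * Complex.I := by ring
    rw [h, Complex.exp_mul_I, Complex.cos_neg, Complex.sin_neg]; ring
  rw [h1, h2]
  have hI2 : Complex.I * Complex.I = -1 := Complex.I_mul_I
  ring

private lemma key_bound (w : ℂ) (a : ℝ) (hw : ‖w‖ ≤ 1)
    (haw : |a| * ‖w‖ ≤ 1) :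
    ‖(Complex.cos w + Complex.I * a * Complex.sin w) - Complex.exp (Complex.I * a * w)‖
      ≤ (1 + |a| + a^2) * ‖w‖ ^ 2 := by
  have hIw : ‖Complex.I * w‖ = ‖w‖ := by
    rw [norm_mul, Complex.norm_I, one_mul]
  have hnIw : ‖-(Complex.I * w)‖ = ‖w‖ := by
    rw [norm_neg, hIw]
  have hIaw : ‖Complex.I * a * w‖ = |a| * ‖w‖ := by
    rw [norm_mul, norm_mul, Complex.norm_I, one_mul, Complex.norm_real, Real.norm_eq_abs]
  have e1 := Complex.norm_exp_sub_one_sub_id_le (x := Complex.I * w) (by rw [hIw]; exact hw)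
  have e2 := Complex.norm_exp_sub_one_sub_id_le (x := -(Complex.I * w)) (by rw [hnIw]; exact hw)
  have e3 := Complex.norm_exp_sub_one_sub_id_le (x := Complex.I * a * w) (by rw [hIaw]; exact haw)
  rw [hIw] at e1; rw [hnIw] at e2; rw [hIaw] at e3
  set r1 := Complex.exp (Complex.I * w) - 1 - Complex.I * w with hr1
  set r2 := Complex.exp (-(Complex.I * w)) - 1 - (-(Complex.I * w)) with hr2
  set r3 := Complex.exp (Complex.I * a * w) - 1 - Complex.I * a * w with hr3
  have hid : (Complex.cos w + Complex.I * a * Complex.sin w) - Complex.exp (Complex.I * a * w)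
      = ((1+(a:ℂ))/2) * r1 + ((1-(a:ℂ))/2) * r2 - r3 := by
    rw [cos_add_sin_eq w a, hr1, hr2, hr3]; ring
  rw [hid]
  have hb : ‖((1+(a:ℂ))/2) * r1 + ((1-(a:ℂ))/2) * r2 - r3‖
      ≤ ‖((1+(a:ℂ))/2)‖ * ‖r1‖
        + ‖((1-(a:ℂ))/2)‖ * ‖r2‖ + ‖r3‖ := by
    calc ‖((1+(a:ℂ))/2) * r1 + ((1-(a:ℂ))/2) * r2 - r3‖
        ≤ ‖((1+(a:ℂ))/2) * r1 + ((1-(a:ℂ))/2) * r2‖ + ‖r3‖ :=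
          norm_sub_le _ _
      _ ≤ ‖((1+(a:ℂ))/2) * r1‖ + ‖((1-(a:ℂ))/2) * r2‖
            + ‖r3‖ := by gcongr; exact norm_add_le _ _
      _ = _ := by rw [norm_mul, norm_mul]
  have ha1 : ‖(1+(a:ℂ))/2‖ ≤ (1 + |a|)/2 := by
    rw [norm_div]
    have h : ((1:ℂ)+(a:ℂ)) = ((1+a : ℝ) : ℂ) := by push_cast; ring
    rw [h, Complex.norm_real, Real.norm_eq_abs]
    simp only [Complex.norm_ofNat]
    gcongr
    calc |1 + a| ≤ |(1:ℝ)| + |a| := abs_add_le _ _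
      _ = 1 + |a| := by rw [abs_one]
  have ha2 : ‖(1-(a:ℂ))/2‖ ≤ (1 + |a|)/2 := by
    rw [norm_div]
    have h : ((1:ℂ)-(a:ℂ)) = ((1-a : ℝ) : ℂ) := by push_cast; ring
    rw [h, Complex.norm_real, Real.norm_eq_abs]
    simp only [Complex.norm_ofNat]
    gcongr
    calc |1 - a| ≤ |(1:ℝ)| + |a| := abs_sub _ _
      _ = 1 + |a| := by rw [abs_one]
  have e3' : ‖r3‖ ≤ a^2 * ‖w‖ ^ 2 := by
    calc ‖r3‖ ≤ (|a| * ‖w‖)^2 := e3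
      _ = a^2 * ‖w‖ ^ 2 := by rw [mul_pow, _root_.sq_abs]
  calc ‖((1+(a:ℂ))/2) * r1 + ((1-(a:ℂ))/2) * r2 - r3‖
      ≤ ‖((1+(a:ℂ))/2)‖ * ‖r1‖
        + ‖((1-(a:ℂ))/2)‖ * ‖r2‖ + ‖r3‖ := hb
    _ ≤ ((1 + |a|)/2) * (‖w‖ ^ 2) + ((1 + |a|)/2) * (‖w‖ ^ 2)
        + a^2 * ‖w‖ ^ 2 := by
        have t1 := mul_le_mul ha1 e1 (norm_nonneg _) (by positivity)
        have t2 := mul_le_mul ha2 e2 (norm_nonneg _) (by positivity)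
        linarith
    _ = (1 + |a| + a^2) * ‖w‖ ^ 2 := by ring
theorem stmt2 (ε : ℕ → ℝ) (hε : ∀ N, ε N ∈ Set.Ico (0 : ℝ) 1)
    (hε0 : Filter.Tendsto ε Filter.atTop (nhds 0)) (a : ℝ)
    (K : Set ℂ) (hK : IsCompact K) :
    TendstoUniformlyOn
      (fun (N : ℕ) (z : ℂ) =>
        Complex.exp (Complex.I * (ε N : ℂ) * z) *
          (Complex.cos (z * (1 - (ε N : ℂ)) / (N : ℂ)) +
              Complex.I * (a : ℂ) * Complex.sin (z * (1 - (ε N : ℂ)) / (N : ℂ))) ^ N)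
      (fun z => Complex.exp (Complex.I * (a : ℂ) * z)) Filter.atTop K := by
  obtain ⟨R, hR0, hKR⟩ : ∃ R : ℝ, 0 ≤ R ∧ ∀ z ∈ K, ‖z‖ ≤ R := by
    obtain ⟨R, hR⟩ := hK.isBounded.subset_closedBall 0
    exact ⟨max R 0, le_max_right _ _, fun z hz => by
      have := hR hz
      simp only [Metric.mem_closedBall, Complex.dist_eq, sub_zero] at this
      exact this.trans (le_max_left _ _)⟩
  set C : ℝ := 1 + |a| + a^2 with hC
  have hC0 : 0 < C := by positivity
  set E : ℝ := Real.exp (|a| * R + C * R^2) with hE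
  set A : ℝ := Real.exp R * E * C * R^2 with hA
  set B : ℝ := 2 * Real.exp (|a| * R) * |1 - a| * R with hB
  have hA0 : 0 ≤ A := by positivity
  have hB0 : 0 ≤ B := by positivity
  rw [Metric.tendstoUniformlyOn_iff]
  intro δ hδ
  have hbnd : Tendsto (fun N : ℕ => A / N + B * ε N) atTop (nhds 0) := by
    have h1 : Tendsto (fun N : ℕ => A / N) atTop (nhds 0) :=
      tendsto_const_nhds.div_atTop tendsto_natCast_atTop_atTop
    have h2 : Tendsto (fun N : ℕ => B * ε N) atTop (nhds 0) := by
      simpa using hε0.const_mul B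
    simpa using h1.add h2
  have hev1 : ∀ᶠ N : ℕ in atTop, A / N + B * ε N < δ :=
    hbnd.eventually (eventually_lt_nhds hδ) |>.mono (fun N h => by simpa using h)
  have hev2 : ∀ᶠ N : ℕ in atTop, R ≤ (N : ℝ) :=
    tendsto_natCast_atTop_atTop.eventually_ge_atTop R
  have hev3 : ∀ᶠ N : ℕ in atTop, |a| * R ≤ (N : ℝ) :=
    tendsto_natCast_atTop_atTop.eventually_ge_atTop (|a| * R)
  have hev4 : ∀ᶠ N : ℕ in atTop, ε N * (|1 - a| * R) ≤ 1 := by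
    have : Tendsto (fun N => ε N * (|1 - a| * R)) atTop (nhds 0) := by
      simpa using hε0.mul_const (|1 - a| * R)
    exact this.eventually (eventually_le_nhds one_pos) |>.mono (fun N h => by simpa using h)
  have hev5 : ∀ᶠ N : ℕ in atTop, 1 ≤ N := eventually_ge_atTop 1
  filter_upwards [hev1, hev2, hev3, hev4, hev5] with N h1 h2 h3 h4 h5
  intro z hz
  have hzR : ‖z‖ ≤ R := hKR z hz
  have hN0 : (0:ℝ) < N := by exact_mod_cast h5
  have hNne : (N:ℂ) ≠ 0 := by exact_mod_cast Nat.cast_ne_zero.mpr (by omega)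
  obtain ⟨hεN0, hεN1⟩ := hε N
  set w : ℂ := z * (1 - (ε N : ℂ)) / (N : ℂ) with hwdef
  have habs1ε : ‖1 - (ε N : ℂ)‖ = 1 - ε N := by
    have : (1 : ℂ) - (ε N : ℂ) = ((1 - ε N : ℝ) : ℂ) := by push_cast; ring
    rw [this, Complex.norm_real, Real.norm_eq_abs, _root_.abs_of_nonneg (by linarith)]
  have hwabs : ‖w‖ ≤ R / N := by
    rw [hwdef, norm_div, norm_mul, habs1ε, Complex.norm_natCast]
    have hnum : ‖z‖ * (1 - ε N) ≤ R := by
      calc ‖z‖ * (1 - ε N) ≤ R * 1 :=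
            mul_le_mul hzR (by linarith) (by linarith) hR0
        _ = R := mul_one R
    exact div_le_div_of_nonneg_right hnum hN0.le
  have hw1 : ‖w‖ ≤ 1 := hwabs.trans (by rw [div_le_one hN0]; exact h2)
  have haw1 : |a| * ‖w‖ ≤ 1 := by
    calc |a| * ‖w‖ ≤ |a| * R / N := by rw [mul_div_assoc]; gcongr
      _ ≤ 1 := by rw [div_le_one hN0]; exact h3
  set f : ℂ := Complex.cos w + Complex.I * a * Complex.sin w with hfdef
  set g : ℂ := Complex.exp (Complex.I * a * w) with hgdef
  have hfg : ‖f - g‖ ≤ C * (R / N)^2 := by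
    calc ‖f - g‖ ≤ C * ‖w‖ ^ 2 := key_bound w a hw1 haw1
      _ ≤ C * (R / N)^2 := by
          have := mul_le_mul_of_nonneg_left (pow_le_pow_left₀ (norm_nonneg w) hwabs 2) hC0.le
          linarith
  have habs_exp_le : ∀ u : ℂ, ‖Complex.exp u‖ ≤ Real.exp (‖u‖) := by
    intro u
    rw [Complex.norm_exp]
    exact Real.exp_le_exp.mpr (Complex.re_le_norm u)
  set u : ℝ := |a| * (R / N) + C * (R / N)^2 with hu
  have hu0 : 0 ≤ u := by positivity
  set M : ℝ := Real.exp u with hM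
  have hM1 : 1 ≤ M := Real.one_le_exp hu0
  have hIaw_abs : ‖Complex.I * a * w‖ = |a| * ‖w‖ := by
    rw [norm_mul, norm_mul, Complex.norm_I, one_mul, Complex.norm_real, Real.norm_eq_abs]
  have hg_le : ‖g‖ ≤ M := by
    calc ‖g‖ ≤ Real.exp (‖Complex.I * a * w‖) := habs_exp_le _
      _ = Real.exp (|a| * ‖w‖) := by rw [hIaw_abs]
      _ ≤ Real.exp u := by
          apply Real.exp_le_exp.mpr
          rw [hu]
          have : |a| * ‖w‖ ≤ |a| * (R / N) := by gcongr
          nlinarith [sq_nonneg (R / N), hC0.le]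
  have hf_le : ‖f‖ ≤ M := by
    have h1 : ‖f‖ ≤ ‖g‖ + C * (R / N)^2 := by
      calc ‖f‖ = ‖g + (f - g)‖ := by congr 1; ring
        _ ≤ ‖g‖ + ‖f - g‖ := norm_add_le _ _
        _ ≤ ‖g‖ + C * (R / N)^2 := add_le_add_right hfg _
    have h2 : ‖g‖ ≤ Real.exp (|a| * (R / N)) := by
      calc ‖g‖ ≤ Real.exp (‖Complex.I * a * w‖) := habs_exp_le _
        _ = Real.exp (|a| * ‖w‖) := by rw [hIaw_abs]
        _ ≤ Real.exp (|a| * (R / N)) := Real.exp_le_exp.mpr (by gcongr)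
    have h3 : Real.exp (|a| * (R / N)) + C * (R / N)^2 ≤ M := by
      have e1 : (1:ℝ) ≤ Real.exp (|a| * (R / N)) := Real.one_le_exp (by positivity)
      have e2 : (1:ℝ) + C * (R / N)^2 ≤ Real.exp (C * (R / N)^2) := by
        have := Real.add_one_le_exp (C * (R / N)^2)
        linarith
      calc Real.exp (|a| * (R / N)) + C * (R / N)^2
          ≤ Real.exp (|a| * (R / N)) * (1 + C * (R / N)^2) := by
            have hy : (0:ℝ) ≤ C * (R / N)^2 := by positivity
            nlinarith [mul_le_mul_of_nonneg_right e1 hy]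
        _ ≤ Real.exp (|a| * (R / N)) * Real.exp (C * (R / N)^2) :=
            mul_le_mul_of_nonneg_left e2 (Real.exp_nonneg _)
        _ = M := by rw [hM, hu, ← Real.exp_add]
    linarith
  have hMN : M ^ N ≤ E := by
    rw [hM, ← Real.exp_nat_mul]
    apply Real.exp_le_exp.mpr
    rw [hu]
    have expand : (N:ℝ) * (|a| * (R / N) + C * (R / N)^2) = |a| * R + C * R^2 / N := by
      field_simp
    rw [expand]
    have hCR : (0:ℝ) ≤ C * R^2 := by positivity
    have hN1 : (1:ℝ) ≤ N := by exact_mod_cast h5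
    have : C * R^2 / N ≤ C * R^2 := by
      rw [div_le_iff₀ hN0]
      nlinarith
    linarith
  have hpow : ‖f ^ N - g ^ N‖ ≤ E * C * R^2 / N := by
    calc ‖f ^ N - g ^ N‖ ≤ N * M ^ N * ‖f - g‖ :=
          pow_sub_pow_norm_le f g M hM1 hf_le hg_le N
      _ ≤ N * E * (C * (R / N)^2) := by
          have hE0 : (0:ℝ) ≤ E := Real.exp_nonneg _
          have t := mul_le_mul hMN hfg (norm_nonneg _) hE0
          calc (N:ℝ) * M ^ N * ‖f - g‖
              = (N:ℝ) * (M ^ N * ‖f - g‖) := by ring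
            _ ≤ (N:ℝ) * (E * (C * (R / N)^2)) := by
                apply mul_le_mul_of_nonneg_left _ hN0.le
                exact t
            _ = N * E * (C * (R / N)^2) := by ring
      _ = E * C * R^2 / N := by field_simp
  have hgN : g ^ N = Complex.exp (Complex.I * a * (z * (1 - (ε N : ℂ)))) := by
    rw [hgdef, ← Complex.exp_nat_mul]
    congr 1
    rw [hwdef]
    field_simp
  have key : Complex.exp (Complex.I * (ε N : ℂ) * z) * g ^ N
      = Complex.exp (Complex.I * a * z) *
          Complex.exp (Complex.I * z * (ε N : ℂ) * (1 - (a:ℂ))) := by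
    rw [hgN, ← Complex.exp_add, ← Complex.exp_add]
    congr 1
    ring
  set v : ℂ := Complex.I * z * (ε N : ℂ) * (1 - (a:ℂ)) with hv
  have hvabs : ‖v‖ = ‖z‖ * ε N * |1 - a| := by
    rw [hv]
    have h1a : (1 : ℂ) - (a : ℂ) = ((1 - a : ℝ) : ℂ) := by push_cast; ring
    rw [norm_mul, norm_mul, norm_mul, Complex.norm_I, one_mul, Complex.norm_real, Real.norm_eq_abs,
      h1a, Complex.norm_real, Real.norm_eq_abs, _root_.abs_of_nonneg hεN0]
  have hv1 : ‖v‖ ≤ 1 := by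
    rw [hvabs]
    calc ‖z‖ * ε N * |1 - a| ≤ R * ε N * |1 - a| := by gcongr
      _ = ε N * (|1 - a| * R) := by ring
      _ ≤ 1 := h4
  have term1 : ‖Complex.exp (Complex.I * a * z) - Complex.exp (Complex.I * (ε N : ℂ) * z) * g ^ N‖
      ≤ B * ε N := by
    rw [key]
    have : Complex.exp (Complex.I * a * z) - Complex.exp (Complex.I * a * z) * Complex.exp v
        = - (Complex.exp (Complex.I * a * z) * (Complex.exp v - 1)) := by ring
    rw [this, norm_neg, norm_mul]
    have hIaz : ‖Complex.exp (Complex.I * a * z)‖ ≤ Real.exp (|a| * R) := by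
      calc ‖Complex.exp (Complex.I * a * z)‖
          ≤ Real.exp (‖Complex.I * a * z‖) := habs_exp_le _
        _ ≤ Real.exp (|a| * R) := by
            apply Real.exp_le_exp.mpr
            rw [norm_mul, norm_mul, Complex.norm_I, one_mul, Complex.norm_real, Real.norm_eq_abs]
            gcongr
    have hev : ‖Complex.exp v - 1‖ ≤ 2 * ‖v‖ :=
      Complex.norm_exp_sub_one_le hv1
    calc ‖Complex.exp (Complex.I * a * z)‖ * ‖Complex.exp v - 1‖
        ≤ Real.exp (|a| * R) * (2 * ‖v‖) :=
          mul_le_mul hIaz hev (norm_nonneg _) (Real.exp_nonneg _)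
      _ ≤ Real.exp (|a| * R) * (2 * (R * ε N * |1 - a|)) := by
          gcongr
          rw [hvabs]
          gcongr
      _ = B * ε N := by rw [hB]; ring
  have hexpε : ‖Complex.exp (Complex.I * (ε N : ℂ) * z)‖ ≤ Real.exp R := by
    calc ‖Complex.exp (Complex.I * (ε N : ℂ) * z)‖
        ≤ Real.exp (‖Complex.I * (ε N : ℂ) * z‖) := habs_exp_le _
      _ ≤ Real.exp R := by
          apply Real.exp_le_exp.mpr
          rw [norm_mul, norm_mul, Complex.norm_I, one_mul, Complex.norm_real, Real.norm_eq_abs,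
            _root_.abs_of_nonneg hεN0]
          calc ε N * ‖z‖ ≤ 1 * R := by
                apply mul_le_mul hεN1.le hzR (norm_nonneg _) zero_le_one
            _ = R := one_mul R
  have split : Complex.exp (Complex.I * a * z) - Complex.exp (Complex.I * (ε N : ℂ) * z) * f ^ N
      = (Complex.exp (Complex.I * a * z) - Complex.exp (Complex.I * (ε N : ℂ) * z) * g ^ N)
        - Complex.exp (Complex.I * (ε N : ℂ) * z) * (f ^ N - g ^ N) := by ring
  rw [Complex.dist_eq, split]
  calc ‖_‖ ≤ ‖Complex.exp (Complex.I * a * z)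
          - Complex.exp (Complex.I * (ε N : ℂ) * z) * g ^ N‖
        + ‖Complex.exp (Complex.I * (ε N : ℂ) * z)‖ * ‖f ^ N - g ^ N‖ := by
        rw [← norm_mul]
        exact norm_sub_le _ _
    _ ≤ B * ε N + Real.exp R * (E * C * R^2 / N) :=
        add_le_add term1 (mul_le_mul hexpε hpow (norm_nonneg _) (Real.exp_nonneg _))
    _ = A / N + B * ε N := by rw [hA]; ring
    _ < δ := h1
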